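/- Let A ∈ ℝ^{N×N} have all its complex eigenvalues in the open left half-plane (Re(μ) < 0 for every μ in the spectrum of A over ℂ), let B ∈ ℝ^{N×J}, C ∈ ℝ^{O×N}, x₀ ∈ ℝ^N, and let u : [0,∞) → ℝ^J be continuous and bounded, i.e., sup_{t≥0} ‖u(t)‖ ≤ M < ∞. Then the state x(t) = exp(tA) x₀ + ∫₀ᵗ exp((t−s)A) B u(s) ds and the output y(t) = C x(t) of the linear control system are bounded on [0,∞): there exists R > 0 with ‖x(t)‖ ≤ R and ‖y(t)‖ ≤ R for all t ≥ 0. -/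

import Mathlib

open Matrix Filter

open Matrix NormedSpace Module Module.End Nat
open scoped ENNReal NNReal

section
attribute [local instance] Matrix.linftyOpNormedAddCommGroup Matrix.linftyOpNormedSpace
  Matrix.linftyOpNormedRing Matrix.linftyOpNormedAlgebra Matrix.linftyOpIsBoundedSMul

variable {n : ℕ}

lemma pow_mulVec_eq {M : Matrix (Fin n) (Fin n) ℂ} {μ : ℂ} {w : Fin n → ℂ}
    (h : M *ᵥ w = μ • w) (k : ℕ) : (M ^ k) *ᵥ w = μ ^ k • w := by
  induction k with
  | zero => simp [Matrix.one_mulVec]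
  | succ k ih =>
      rw [pow_succ, ← Matrix.mulVec_mulVec, h, Matrix.mulVec_smul, ih, pow_succ]
      rw [smul_smul, mul_comm]

lemma exp_mulVec_eq {M : Matrix (Fin n) (Fin n) ℂ} {μ : ℂ} {w : Fin n → ℂ}
    (h : M *ᵥ w = μ • w) : (NormedSpace.exp M) *ᵥ w = Complex.exp μ • w := by
  haveI : CompleteSpace (Matrix (Fin n) (Fin n) ℂ) := FiniteDimensional.complete ℂ _
  let L : Matrix (Fin n) (Fin n) ℂ →ₗ[ℂ] (Fin n → ℂ) :=
    { toFun := fun X => X *ᵥ w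
      map_add' := fun X Y => Matrix.add_mulVec X Y w
      map_smul' := fun c X => Matrix.smul_mulVec c X w }
  have hL : Continuous L := L.continuous_of_finiteDimensional
  have hsum : Summable fun k : ℕ => ((k ! : ℂ)⁻¹) • M ^ k := NormedSpace.expSeries_summable' M
  have h1 : (NormedSpace.exp M) *ᵥ w = ∑' k : ℕ, (((k ! : ℂ)⁻¹) • M ^ k) *ᵥ w := by
    have := (hsum.hasSum.map L hL).tsum_eq
    rw [NormedSpace.exp_eq_tsum ℂ]
    exact this.symm
  rw [h1]
  have h2 : ∀ k : ℕ, (((k ! : ℂ)⁻¹) • M ^ k) *ᵥ w = (((k ! : ℂ)⁻¹) * μ ^ k) • w := by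
    intro k
    rw [Matrix.smul_mulVec, pow_mulVec_eq h, smul_smul]
  simp_rw [h2]
  rw [Summable.tsum_smul_const]
  · congr 1
    rw [Complex.exp_eq_exp_ℂ, NormedSpace.exp_eq_tsum ℂ]
    simp [smul_eq_mul]
  · have : Summable fun k : ℕ => ((k ! : ℂ)⁻¹) • μ ^ k := NormedSpace.expSeries_summable' μ
    simpa [smul_eq_mul] using this

lemma spec_exp_subset (M : Matrix (Fin n) (Fin n) ℂ) :
    ∀ lam ∈ spectrum ℂ (NormedSpace.exp M), ∃ μ ∈ spectrum ℂ M, lam = Complex.exp μ := by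
  intro lam hlam
  rcases Nat.eq_zero_or_pos n with hn | hn
  · exfalso
    subst hn
    haveI : Subsingleton (Matrix (Fin 0) (Fin 0) ℂ) := by
      constructor; intro a b; ext i; exact absurd i.2 (by omega)
    exact (spectrum.mem_iff.mp hlam) (isUnit_of_subsingleton _)
  have hdet : ((algebraMap ℂ (Matrix (Fin n) (Fin n) ℂ)) lam - NormedSpace.exp M).det = 0 := by
    by_contra h
    exact (spectrum.mem_iff.mp hlam)
      ((Matrix.isUnit_iff_isUnit_det _).mpr (isUnit_iff_ne_zero.mpr h))
  obtain ⟨v, hv0, hv⟩ := (Matrix.exists_mulVec_eq_zero_iff).mpr hdet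
  have hv' : (NormedSpace.exp M) *ᵥ v = lam • v := by
    rw [Matrix.sub_mulVec, sub_eq_zero] at hv
    rw [← hv, Algebra.algebraMap_eq_smul_one, Matrix.smul_mulVec, Matrix.one_mulVec]
  -- the eigenspace E of exp M for lam
  set f := Matrix.toLin' (NormedSpace.exp M) with hf
  set E := Module.End.eigenspace f lam with hE
  have hvE : v ∈ E := by
    rw [hE, Module.End.mem_eigenspace_iff, hf, Matrix.toLin'_apply, hv']
  haveI : Nontrivial E := by
    refine nontrivial_of_ne ⟨v, hvE⟩ 0 ?_
    simp [Subtype.ext_iff, hv0]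
  -- M maps E into E
  have hcomm : M * NormedSpace.exp M = NormedSpace.exp M * M := by
    haveI : CompleteSpace (Matrix (Fin n) (Fin n) ℂ) := FiniteDimensional.complete ℂ _
    exact (Commute.refl M).exp_right.eq
  have hinv : ∀ w ∈ E, (Matrix.toLin' M) w ∈ E := by
    intro w hw
    rw [hE, Module.End.mem_eigenspace_iff] at hw ⊢
    rw [hf, Matrix.toLin'_apply, Matrix.toLin'_apply] at *
    rw [Matrix.mulVec_mulVec, ← hcomm, ← Matrix.mulVec_mulVec, hw, Matrix.mulVec_smul]
  set g : E →ₗ[ℂ] E := (Matrix.toLin' M).restrict hinv with hg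
  obtain ⟨μ, hμ⟩ := Module.End.exists_eigenvalue g
  obtain ⟨w', hw'⟩ := hμ.exists_hasEigenvector
  have hwe : (Matrix.toLin' M) (w' : Fin n → ℂ) = μ • (w' : Fin n → ℂ) := by
    have := hw'.apply_eq_smul
    have h2 := congrArg (Subtype.val) this
    simpa [hg, LinearMap.restrict_apply] using h2
  have hwne : (w' : Fin n → ℂ) ≠ 0 := fun h => hw'.2 (by exact Subtype.ext h)
  have hMw : M *ᵥ (w' : Fin n → ℂ) = μ • (w' : Fin n → ℂ) := by
    rwa [Matrix.toLin'_apply] at hwe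
  refine ⟨μ, ?_, ?_⟩
  · rw [← AlgEquiv.spectrum_eq (Matrix.toLinAlgEquiv' (R := ℂ) (n := Fin n)),
      ← Module.End.hasEigenvalue_iff_mem_spectrum]
    refine Module.End.hasEigenvalue_of_hasEigenvector (x := (w' : Fin n → ℂ)) ⟨?_, hwne⟩
    rw [Module.End.mem_eigenspace_iff]
    simpa [Matrix.toLinAlgEquiv'_apply] using hwe
  · -- lam = exp μ
    have h1 : (NormedSpace.exp M) *ᵥ (w' : Fin n → ℂ) = Complex.exp μ • w' := exp_mulVec_eq hMw
    have h2 : (NormedSpace.exp M) *ᵥ (w' : Fin n → ℂ) = lam • (w' : Fin n → ℂ) := by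
      have h4 : (w' : Fin n → ℂ) ∈ Module.End.eigenspace f lam := w'.2
      simpa [hf, Matrix.toLin'_apply] using Module.End.mem_eigenspace_iff.mp h4
    have := h1.symm.trans h2
    have h3 : (lam - Complex.exp μ) • (w' : Fin n → ℂ) = 0 := by
      rw [sub_smul, this, sub_self]
    rcases smul_eq_zero.mp h3 with h | h
    · exact (sub_eq_zero.mp h).symm ▸ rfl
    · exact absurd h hwne

end

section
attribute [local instance] Matrix.linftyOpNormedAddCommGroup Matrix.linftyOpNormedSpace
  Matrix.linftyOpNormedRing Matrix.linftyOpNormedAlgebra Matrix.linftyOpIsBoundedSMul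

variable {n : ℕ}

lemma norm_map_ofReal (X : Matrix (Fin n) (Fin n) ℝ) :
    ‖X.map (algebraMap ℝ ℂ)‖ = ‖X‖ := by
  rw [Matrix.linfty_opNorm_def, Matrix.linfty_opNorm_def]
  congr 1
  ext i
  congr 1
  ext j
  simp [Matrix.map_apply, Complex.nnnorm_real]

lemma map_exp_smul (A : Matrix (Fin n) (Fin n) ℝ) (t : ℝ) :
    (NormedSpace.exp (t • A)).map (algebraMap ℝ ℂ)
      = NormedSpace.exp (t • A.map (algebraMap ℝ ℂ)) := by
  haveI : CompleteSpace (Matrix (Fin n) (Fin n) ℝ) := FiniteDimensional.complete ℝ _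
  haveI : CompleteSpace (Matrix (Fin n) (Fin n) ℂ) := FiniteDimensional.complete ℝ _
  set ψ : Matrix (Fin n) (Fin n) ℝ →ₐ[ℝ] Matrix (Fin n) (Fin n) ℂ :=
    (Algebra.ofId ℝ ℂ).mapMatrix with hψ
  have hc : Continuous ψ := ψ.toLinearMap.continuous_of_finiteDimensional
  have h1 : ψ (NormedSpace.exp (t • A)) = NormedSpace.exp (ψ (t • A)) :=
    map_exp ψ hc (t • A)
  have h2 : ψ (t • A) = t • A.map (algebraMap ℝ ℂ) := by
    rw [_root_.map_smul]
    rfl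
  have h3 : (NormedSpace.exp : Matrix (Fin n) (Fin n) ℂ → _) = NormedSpace.exp :=
    rfl
  calc (NormedSpace.exp (t • A)).map (algebraMap ℝ ℂ) = ψ (NormedSpace.exp (t • A)) := rfl
    _ = NormedSpace.exp (t • A.map (algebraMap ℝ ℂ)) := by rw [h1, h2]
    _ = NormedSpace.exp (t • A.map (algebraMap ℝ ℂ)) := by rw [h3]
end

section
attribute [local instance] Matrix.linftyOpNormedAddCommGroup Matrix.linftyOpNormedSpace
  Matrix.linftyOpNormedRing Matrix.linftyOpNormedAlgebra Matrix.linftyOpIsBoundedSMul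

variable {n : ℕ}

lemma exp_norm_decay (A : Matrix (Fin n) (Fin n) ℝ)
    (hA : ∀ μ ∈ spectrum ℂ (A.map (algebraMap ℝ ℂ)), μ.re < 0) :
    ∃ c : ℝ, 0 < c ∧ ∃ b : ℝ, b < 0 ∧ ∀ t : ℝ, 0 ≤ t →
      ‖NormedSpace.exp (t • A)‖ ≤ c * Real.exp (b * t) := by
  rcases Nat.eq_zero_or_pos n with hn | hn
  · subst hn
    refine ⟨1, one_pos, -1, by norm_num, fun t ht => ?_⟩
    haveI : Subsingleton (Matrix (Fin 0) (Fin 0) ℝ) := by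
      constructor; intro a b; ext i; exact absurd i.2 (by omega)
    rw [Subsingleton.elim (NormedSpace.exp (t • A)) 0, norm_zero]
    positivity
  haveI : Nonempty (Fin n) := ⟨⟨0, hn⟩⟩
  haveI : CompleteSpace (Matrix (Fin n) (Fin n) ℂ) := FiniteDimensional.complete ℂ _
  set Mc : Matrix (Fin n) (Fin n) ℂ := A.map (algebraMap ℝ ℂ) with hMc
  set a : Matrix (Fin n) (Fin n) ℂ := NormedSpace.exp Mc with ha
  -- spectral radius of a is < 1
  have hrad : spectralRadius ℂ a < 1 := by
    obtain ⟨z, hz, hznorm⟩ := spectrum.exists_nnnorm_eq_spectralRadius (a := a)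
    obtain ⟨μ, hμ, rfl⟩ := spec_exp_subset Mc z hz
    rw [← hznorm]
    have : ‖Complex.exp μ‖ < 1 := by
      rw [Complex.norm_exp]
      exact Real.exp_lt_one_iff.mpr (hA μ hμ)
    exact_mod_cast this
  obtain ⟨r, hr1, hr2⟩ := ENNReal.lt_iff_exists_nnreal_btwn.mp hrad
  have hrpos : 0 < (r : ℝ) := by
    have : (0 : ℝ≥0∞) < r := lt_of_le_of_lt _root_.zero_le hr1
    exact_mod_cast this
  have hrlt1 : (r : ℝ) < 1 := by exact_mod_cast hr2
  -- Gelfand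
  have hg := spectrum.pow_nnnorm_pow_one_div_tendsto_nhds_spectralRadius a
  obtain ⟨k₀, hk₀⟩ := Filter.eventually_atTop.mp (hg.eventually_lt_const hr1)
  have hk : ∀ k : ℕ, k₀ ≤ k → 1 ≤ k → ‖a ^ k‖ ≤ (r : ℝ) ^ k := by
    intro k hkk hk1
    have h1 := hk₀ k hkk
    have h2 : ((‖a ^ k‖₊ : ℝ≥0∞) ^ (1 / (k : ℝ))) ^ (k : ℝ) ≤ ((r : ℝ≥0∞)) ^ (k : ℝ) :=
      ENNReal.rpow_le_rpow h1.le (by positivity)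
    rw [← ENNReal.rpow_mul, one_div,
      inv_mul_cancel₀ (by exact_mod_cast Nat.one_le_iff_ne_zero.mp hk1 : (k : ℝ) ≠ 0),
      ENNReal.rpow_one, ENNReal.rpow_natCast, ← ENNReal.coe_pow, ENNReal.coe_le_coe] at h2
    have := h2
    calc ‖a ^ k‖ = ((‖a ^ k‖₊ : ℝ≥0) : ℝ) := rfl
      _ ≤ ((r ^ k : ℝ≥0) : ℝ) := by exact_mod_cast this
      _ = (r : ℝ) ^ k := by push_cast; ring
  -- sup on compact interval
  have hcontc : Continuous fun s : ℝ => NormedSpace.exp (s • Mc) :=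
    NormedSpace.exp_continuous.comp (continuous_id.smul continuous_const)
  obtain ⟨K', hK'⟩ := (isCompact_Icc (a := (0:ℝ)) (b := (k₀ + 1 : ℝ))).exists_bound_of_continuousOn
    hcontc.continuousOn
  set K : ℝ := max K' 1 with hKdef
  have hK1 : (1:ℝ) ≤ K := le_max_right _ _
  have hKpos : (0:ℝ) < K := lt_of_lt_of_le one_pos hK1
  have hKb : ∀ s : ℝ, 0 ≤ s → s ≤ (k₀ + 1 : ℝ) → ‖NormedSpace.exp (s • Mc)‖ ≤ K := by
    intro s h1 h2
    exact le_trans (hK' s ⟨h1, h2⟩) (le_max_left _ _)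
  set b : ℝ := Real.log r with hb
  have hbneg : b < 0 := Real.log_neg hrpos hrlt1
  have hrexp : ∀ k : ℕ, (r : ℝ) ^ k = Real.exp (b * k) := by
    intro k
    rw [mul_comm, Real.exp_nat_mul, Real.exp_log hrpos]
  set c : ℝ := K * Real.exp (-b) + K * Real.exp (-b * (k₀ + 1)) with hc
  have hcpos : 0 < c := by positivity
  refine ⟨c, hcpos, b, hbneg, fun t ht => ?_⟩
  have hnorm_eq : ‖NormedSpace.exp (t • A)‖ = ‖NormedSpace.exp (t • Mc)‖ := by
    rw [← norm_map_ofReal, map_exp_smul]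
  rw [hnorm_eq]
  rcases le_or_gt t (k₀ + 1 : ℝ) with hcase | hcase
  · have h1 : ‖NormedSpace.exp (t • Mc)‖ ≤ K := hKb t ht hcase
    have h2 : Real.exp (-b * t) ≤ Real.exp (-b * (k₀ + 1)) := by
      apply Real.exp_le_exp.mpr
      nlinarith
    calc ‖NormedSpace.exp (t • Mc)‖ ≤ K := h1
      _ = K * Real.exp (-b * t) * Real.exp (b * t) := by
          rw [mul_assoc, ← Real.exp_add]; ring_nf; rw [Real.exp_zero, mul_one]
      _ ≤ K * Real.exp (-b * (k₀ + 1)) * Real.exp (b * t) := by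
          apply mul_le_mul_of_nonneg_right _ (Real.exp_pos _).le
          exact mul_le_mul_of_nonneg_left h2 hKpos.le
      _ ≤ c * Real.exp (b * t) := by
          apply mul_le_mul_of_nonneg_right _ (Real.exp_pos _).le
          rw [hc]
          nlinarith [mul_pos hKpos (Real.exp_pos (-b))]
  · set k : ℕ := ⌊t⌋₊ with hkdef
    have hk1 : (k : ℝ) ≤ t := Nat.floor_le ht
    have hk2 : t < (k : ℝ) + 1 := Nat.lt_floor_add_one t
    have hkge : k₀ + 1 ≤ k := by
      apply Nat.le_floor
      push_cast
      linarith
    have hsplit : t • Mc = ((k : ℝ) • Mc) + ((t - k) • Mc) := by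
      rw [← add_smul]; ring_nf
    have hcomm : Commute ((k : ℝ) • Mc) ((t - k) • Mc) :=
      ((Commute.refl Mc).smul_left _).smul_right _
    have hdecomp : NormedSpace.exp (t • Mc)
        = NormedSpace.exp ((k : ℝ) • Mc) * NormedSpace.exp ((t - k) • Mc) := by
      rw [hsplit, Matrix.exp_add_of_commute _ _ hcomm]
    have hpow : NormedSpace.exp ((k : ℝ) • Mc) = a ^ k := by
      rw [Nat.cast_smul_eq_nsmul ℝ k Mc, Matrix.exp_nsmul]
    have hfrac0 : (0:ℝ) ≤ t - k := by linarith
    have hfrac1 : t - (k:ℝ) ≤ (k₀ + 1 : ℝ) := by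
      have : (1:ℝ) ≤ (k₀:ℝ) + 1 := le_add_of_nonneg_left (Nat.cast_nonneg _)
      linarith
    calc ‖NormedSpace.exp (t • Mc)‖
        = ‖a ^ k * NormedSpace.exp ((t - k) • Mc)‖ := by rw [hdecomp, hpow]
      _ ≤ ‖a ^ k‖ * ‖NormedSpace.exp ((t - k) • Mc)‖ := norm_mul_le _ _
      _ ≤ (r : ℝ) ^ k * K := by
          apply mul_le_mul (hk k (by omega) (by omega)) (hKb _ hfrac0 hfrac1)
            (norm_nonneg _) (pow_nonneg hrpos.le _)
      _ = Real.exp (b * k) * K := by rw [hrexp]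
      _ ≤ Real.exp (b * (t - 1)) * K := by
          apply mul_le_mul_of_nonneg_right _ hKpos.le
          apply Real.exp_le_exp.mpr
          nlinarith
      _ = K * Real.exp (-b) * Real.exp (b * t) := by
          rw [show b * (t - 1) = b * t + -b by ring, Real.exp_add]
          ring
      _ ≤ c * Real.exp (b * t) := by
          apply mul_le_mul_of_nonneg_right _ (Real.exp_pos _).le
          rw [hc]
          nlinarith [mul_pos hKpos (Real.exp_pos (-b * (k₀ + 1)))]

lemma exp_mulVec_decay (A : Matrix (Fin n) (Fin n) ℝ)
    (hA : ∀ μ ∈ spectrum ℂ (A.map (algebraMap ℝ ℂ)), μ.re < 0) :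
    ∃ c : ℝ, 0 < c ∧ ∃ b : ℝ, b < 0 ∧ ∀ t : ℝ, 0 ≤ t → ∀ v : Fin n → ℝ,
      ‖(NormedSpace.exp (t • A)) *ᵥ v‖ ≤ c * Real.exp (b * t) * ‖v‖ := by
  obtain ⟨c, hcpos, b, hbneg, hdecay⟩ := exp_norm_decay A hA
  refine ⟨c, hcpos, b, hbneg, fun t ht v => ?_⟩
  calc ‖(NormedSpace.exp (t • A)) *ᵥ v‖ ≤ ‖NormedSpace.exp (t • A)‖ * ‖v‖ :=
        Matrix.linfty_opNorm_mulVec _ _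
    _ ≤ c * Real.exp (b * t) * ‖v‖ :=
        mul_le_mul_of_nonneg_right (hdecay t ht) (norm_nonneg _)

lemma mulVec_norm_bound {m k : ℕ} (B : Matrix (Fin m) (Fin k) ℝ) :
    ∃ c : ℝ, 0 ≤ c ∧ ∀ v : Fin k → ℝ, ‖B *ᵥ v‖ ≤ c * ‖v‖ :=
  ⟨‖B‖, norm_nonneg _, fun v => Matrix.linfty_opNorm_mulVec _ _⟩

end



/-- For a linear control system with Hurwitz system matrix `A` (all complex eigenvalues
in the open left half-plane), continuous bounded input `u`, state given by the
variation-of-constants formula and output `y = C x`, both the state and the output are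
bounded on `[0,∞)`. -/
theorem hurwitz_bounded_input_bounded_state_and_output
    (N J O : ℕ) (A : Matrix (Fin N) (Fin N) ℝ) (B : Matrix (Fin N) (Fin J) ℝ)
    (C : Matrix (Fin O) (Fin N) ℝ) (x₀ : Fin N → ℝ)
    (hA : ∀ μ ∈ spectrum ℂ (A.map (algebraMap ℝ ℂ)), μ.re < 0)
    (u : ℝ → Fin J → ℝ) (hu : ContinuousOn u (Set.Ici (0 : ℝ)))
    (M : ℝ) (hbound : ∀ t : ℝ, 0 ≤ t → ‖u t‖ ≤ M)
    (x : ℝ → Fin N → ℝ)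
    (hx : ∀ t : ℝ, x t =
      (NormedSpace.exp (t • A)).mulVec x₀ +
        ∫ s in (0 : ℝ)..t, (NormedSpace.exp ((t - s) • A)).mulVec (B.mulVec (u s)))
    (y : ℝ → Fin O → ℝ) (hy : ∀ t : ℝ, y t = C.mulVec (x t)) :
    ∃ R : ℝ, 0 < R ∧ ∀ t : ℝ, 0 ≤ t → ‖x t‖ ≤ R ∧ ‖y t‖ ≤ R := by
  obtain ⟨c, hcpos, b, hbneg, hdec⟩ := exp_mulVec_decay A hA
  obtain ⟨cB, hcB, hB⟩ := mulVec_norm_bound B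
  obtain ⟨cC, hcC, hC⟩ := mulVec_norm_bound C
  have hM0 : 0 ≤ M := le_trans (norm_nonneg _) (hbound 0 le_rfl)
  set Rx : ℝ := c * ‖x₀‖ + c * cB * M * (1 / (-b)) with hRx
  have hRxnn : 0 ≤ Rx := by
    have h1 : (0:ℝ) < -b := by linarith
    positivity
  set R : ℝ := Rx + cC * Rx + 1 with hR
  have hxbound : ∀ t : ℝ, 0 ≤ t → ‖x t‖ ≤ Rx := by
    intro t ht
    rw [hx t]
    refine le_trans (norm_add_le _ _) ?_
    have hterm1 : ‖(NormedSpace.exp (t • A)).mulVec x₀‖ ≤ c * ‖x₀‖ := by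
      refine le_trans (hdec t ht x₀) ?_
      have : Real.exp (b * t) ≤ 1 := Real.exp_le_one_iff.mpr (mul_nonpos_of_nonpos_of_nonneg hbneg.le ht)
      nlinarith [norm_nonneg x₀, mul_nonneg (mul_nonneg hcpos.le (norm_nonneg x₀)) (sub_nonneg.mpr this)]
    have hterm2 : ‖∫ s in (0:ℝ)..t, (NormedSpace.exp ((t - s) • A)).mulVec (B.mulVec (u s))‖
        ≤ c * cB * M * (1 / (-b)) := by
      set G : ℝ → Fin N → ℝ := fun s => (NormedSpace.exp ((t - s) • A)).mulVec (B.mulVec (u s)) with hG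
      -- continuity of G on [0, t]
      letI := Matrix.linftyOpNormedAddCommGroup (m := Fin N) (n := Fin N) (α := ℝ)
      letI := Matrix.linftyOpNormedRing (n := Fin N) (α := ℝ)
      letI := Matrix.linftyOpNormedAlgebra (n := Fin N) (α := ℝ) (R := ℝ)
      letI := Matrix.linftyOpNormedAlgebra (n := Fin N) (α := ℝ) (R := ℚ)
      haveI : CompleteSpace (Matrix (Fin N) (Fin N) ℝ) := FiniteDimensional.complete ℝ _
      have hexpc : Continuous fun s : ℝ => NormedSpace.exp ((t - s) • A) :=
        NormedSpace.exp_continuous.comp ((continuous_const.sub continuous_id).smul continuous_const)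
      have hBu : ContinuousOn (fun s : ℝ => B.mulVec (u s)) (Set.Icc 0 t) := by
        have h1 : Continuous fun v : Fin J → ℝ => B.mulVec v := by
          have := (Matrix.mulVecLin B).continuous_of_finiteDimensional
          exact this
        exact h1.comp_continuousOn (hu.mono (fun s hs => hs.1))
      have hmv : Continuous fun p : Matrix (Fin N) (Fin N) ℝ × (Fin N → ℝ) => p.1.mulVec p.2 :=
        continuous_fst.matrix_mulVec continuous_snd
      have hGc : ContinuousOn G (Set.Icc 0 t) := by
        have : ContinuousOn (fun s : ℝ => (NormedSpace.exp ((t - s) • A), B.mulVec (u s)))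
            (Set.Icc 0 t) := hexpc.continuousOn.prodMk hBu
        exact hmv.comp_continuousOn this
      have hGint : IntervalIntegrable G MeasureTheory.volume 0 t :=
        (hGc.mono (by rw [Set.uIcc_of_le ht])).intervalIntegrable
      have hptwise : ∀ s ∈ Set.Icc (0:ℝ) t, ‖G s‖ ≤ (c * cB * M) * Real.exp (b * (t - s)) := by
        intro s hs
        have h1 : ‖G s‖ ≤ c * Real.exp (b * (t - s)) * ‖B.mulVec (u s)‖ :=
          hdec (t - s) (by linarith [hs.2]) _
        have h2 : ‖B.mulVec (u s)‖ ≤ cB * M := by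
          refine le_trans (hB (u s)) ?_
          exact mul_le_mul_of_nonneg_left (hbound s hs.1) hcB
        calc ‖G s‖ ≤ c * Real.exp (b * (t - s)) * ‖B.mulVec (u s)‖ := h1
          _ ≤ c * Real.exp (b * (t - s)) * (cB * M) := by
              apply mul_le_mul_of_nonneg_left h2
              positivity
          _ = (c * cB * M) * Real.exp (b * (t - s)) := by ring
      have hRHSint : IntervalIntegrable (fun s => (c * cB * M) * Real.exp (b * (t - s)))
          MeasureTheory.volume 0 t :=
        Continuous.intervalIntegrable (continuous_const.mul
          (Real.continuous_exp.comp (continuous_const.mul (continuous_const.sub continuous_id)))) 0 t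
      have hstep1 : ‖∫ s in (0:ℝ)..t, G s‖ ≤ ∫ s in (0:ℝ)..t, ‖G s‖ :=
        intervalIntegral.norm_integral_le_integral_norm ht
      have hstep2 : (∫ s in (0:ℝ)..t, ‖G s‖)
          ≤ ∫ s in (0:ℝ)..t, (c * cB * M) * Real.exp (b * (t - s)) :=
        intervalIntegral.integral_mono_on ht hGint.norm hRHSint hptwise
      have hIval : (∫ s in (0:ℝ)..t, Real.exp (b * (t - s))) = (Real.exp (b * t) - 1) / b := by
        have h1 : (∫ s in (0:ℝ)..t, Real.exp (b * (t - s)))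
            = ∫ s in (0:ℝ)..t, Real.exp (b * s) := by
          have := intervalIntegral.integral_comp_sub_left (a := (0:ℝ)) (b := t)
            (fun s => Real.exp (b * s)) t
          simpa using this
        rw [h1]
        have h2 : ∀ s ∈ Set.uIcc (0:ℝ) t, HasDerivAt (fun s => Real.exp (b * s) / b)
            (Real.exp (b * s)) s := by
          intro s _
          have h3 : HasDerivAt (fun s : ℝ => b * s) b s := by
            simpa using (hasDerivAt_id s).const_mul b
          have h4 := (Real.hasDerivAt_exp (b * s)).comp s h3
          have h5 := h4.div_const b
          simpa [mul_div_assoc, mul_div_cancel_right₀ _ (ne_of_lt hbneg)] using h5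
        have h6 := intervalIntegral.integral_eq_sub_of_hasDerivAt h2
          ((Real.continuous_exp.comp (continuous_const.mul continuous_id)).intervalIntegrable 0 t)
        rw [h6, mul_zero, Real.exp_zero]
        ring
      have hIle : (∫ s in (0:ℝ)..t, Real.exp (b * (t - s))) ≤ 1 / (-b) := by
        rw [hIval]
        have hbpos : (0:ℝ) < -b := by linarith
        rw [show (Real.exp (b * t) - 1) / b = (1 - Real.exp (b * t)) / (-b) from by
          rw [div_eq_div_iff hbneg.ne (neg_ne_zero.mpr hbneg.ne)]; ring]
        have h7 : 1 - Real.exp (b * t) ≤ 1 := by linarith [Real.exp_pos (b * t)]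
        exact div_le_div_of_nonneg_right h7 hbpos.le |>.trans le_rfl
      calc ‖∫ s in (0:ℝ)..t, G s‖ ≤ ∫ s in (0:ℝ)..t, (c * cB * M) * Real.exp (b * (t - s)) :=
            le_trans hstep1 hstep2
        _ = (c * cB * M) * ∫ s in (0:ℝ)..t, Real.exp (b * (t - s)) := by
            rw [intervalIntegral.integral_const_mul]
        _ ≤ (c * cB * M) * (1 / (-b)) := by
            apply mul_le_mul_of_nonneg_left hIle
            positivity
        _ = c * cB * M * (1 / (-b)) := by ring
    rw [hRx]
    linarith
  refine ⟨R, by positivity, fun t ht => ?_⟩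
  constructor
  · have := hxbound t ht
    rw [hR]
    nlinarith [mul_nonneg hcC hRxnn]
  · rw [hy t]
    refine le_trans (hC (x t)) ?_
    rw [hR]
    nlinarith [hxbound t ht, mul_le_mul_of_nonneg_left (hxbound t ht) hcC]
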